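/- Let X = {X(t), t ∈ ℝ^d} be a stochastically continuous and proper (E,D)-w.o.s.s. random field with values in ℝ^m. Let λ > 0 be an eigenvalue of E and let ξ ∈ ℝ^d \ {0} satisfy Eξ = λξ. Then there exists a continuous function f : ℝ \ {0} → ℝ^m such that b_r(uξ) = f(u r^λ) − r^D f(u) for all u ≠ 0 and all r > 0. -/

import Mathlib

open MeasureTheory Filter Matrix Topology Set
open scoped ENNReal NNReal

/-- `mpow r A` is `r^A := exp((ln r) A)` for `r > 0` and a real square matrix `A`. -/
noncomputable def mpow {n : ℕ} (r : ℝ) (A : Matrix (Fin n) (Fin n) ℝ) :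
    Matrix (Fin n) (Fin n) ℝ :=
  NormedSpace.exp (Real.log r • A)

/-- The set of (complex) eigenvalues of a real square matrix. -/
def matSpectrum {n : ℕ} (A : Matrix (Fin n) (Fin n) ℝ) : Set ℂ :=
  spectrum ℂ (A.map (Complex.ofReal))

/-- `QSet n` is `Q(ℝⁿ)`: matrices whose eigenvalues all have positive real part. -/
def QSet (n : ℕ) : Set (Matrix (Fin n) (Fin n) ℝ) :=
  {A | ∀ μ ∈ matSpectrum A, 0 < μ.re}

/-- `MSet n` is `M(ℝⁿ)`: matrices whose eigenvalues all have nonnegative real part and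
such that every eigenvalue with zero real part is a simple root of the minimal polynomial. -/
def MSet (n : ℕ) : Set (Matrix (Fin n) (Fin n) ℝ) :=
  {A | ∀ μ ∈ matSpectrum A, 0 ≤ μ.re ∧
    (μ.re = 0 → (minpoly ℂ (A.map (Complex.ofReal))).rootMultiplicity μ = 1)}

/-- Equality of all finite-dimensional distributions of two random fields. -/
def IdentFDD {Ω T β : Type*} [MeasurableSpace Ω] [MeasurableSpace β]
    (P : Measure Ω) (Y Z : T → Ω → β) : Prop :=
  ∀ (k : ℕ) (t : Fin k → T),
    P.map (fun ω i => Y (t i) ω) = P.map (fun ω i => Z (t i) ω)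

/-- Stochastic continuity: `X s → X t` in probability whenever `s → t`. -/
def StochContinuous {Ω : Type*} [MeasurableSpace Ω] (P : Measure Ω) {d m : ℕ}
    (X : (Fin d → ℝ) → Ω → (Fin m → ℝ)) : Prop :=
  ∀ (t : Fin d → ℝ), ∀ ε > (0 : ℝ),
    Tendsto (fun s => P {ω | ε ≤ dist (X s ω) (X t ω)}) (𝓝 t) (𝓝 0)

/-- A distribution on `ℝ^m` is full if its support is not contained in any proper
hyperplane; equivalently, it does not give full mass to any hyperplane. -/
def IsFullMeasure {m : ℕ} (μ : Measure (Fin m → ℝ)) : Prop :=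
  ∀ (y : Fin m → ℝ), y ≠ 0 → ∀ c : ℝ, μ {x | ∑ i, x i * y i = c} ≠ 1

/-- A random field is proper if the distribution of `X t` is full for every `t ≠ 0`. -/
def ProperField {Ω : Type*} [MeasurableSpace Ω] (P : Measure Ω) {d m : ℕ}
    (X : (Fin d → ℝ) → Ω → (Fin m → ℝ)) : Prop :=
  ∀ t : Fin d → ℝ, t ≠ 0 → IsFullMeasure (P.map (X t))

/-- Wide-sense operator-self-similarity with time-variable scaling exponent `E`. -/
def WOSS {Ω : Type*} [MeasurableSpace Ω] (P : Measure Ω) {d m : ℕ}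
    (X : (Fin d → ℝ) → Ω → (Fin m → ℝ)) (E : Matrix (Fin d) (Fin d) ℝ) : Prop :=
  ∀ r : ℝ, 0 < r → ∃ (B : Matrix (Fin m) (Fin m) ℝ) (a : (Fin d → ℝ) → (Fin m → ℝ)),
    IdentFDD P (fun t ω => X (mpow r E *ᵥ t) ω) (fun t ω => B *ᵥ X t ω + a t)

/-- The operator norm `max_{|x|=1} |Q x|` (Euclidean norms) of a matrix. -/
noncomputable def opNorm {n m : ℕ} (Q : Matrix (Fin m) (Fin n) ℝ) : ℝ :=
  ‖LinearMap.toContinuousLinearMap (Matrix.toEuclideanLin Q)‖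

/-- The Euclidean norm of a vector in `ℝ^n`. -/
noncomputable def euclNorm {n : ℕ} (v : Fin n → ℝ) : ℝ :=
  Real.sqrt (∑ i, v i ^ 2)

/-- `G_r`: invertible matrices `A` such that `{X(r^E t)} ≡fdd {A X(t) + b(t)}`
for some deterministic function `b : ℝ^d → ℝ^m`. -/
def GSet {Ω : Type*} [MeasurableSpace Ω] (P : Measure Ω) {d m : ℕ}
    (X : (Fin d → ℝ) → Ω → (Fin m → ℝ)) (E : Matrix (Fin d) (Fin d) ℝ)
    (r : ℝ) : Set (Matrix (Fin m) (Fin m) ℝ) :=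
  {A | IsUnit A ∧ ∃ b : (Fin d → ℝ) → (Fin m → ℝ),
    IdentFDD P (fun t ω => X (mpow r E *ᵥ t) ω) (fun t ω => A *ᵥ X t ω + b t)}

/-- `G = ⋃_{r>0} G_r`. -/
def GAll {Ω : Type*} [MeasurableSpace Ω] (P : Measure Ω) {d m : ℕ}
    (X : (Fin d → ℝ) → Ω → (Fin m → ℝ)) (E : Matrix (Fin d) (Fin d) ℝ) :
    Set (Matrix (Fin m) (Fin m) ℝ) :=
  ⋃ r ∈ Set.Ioi (0 : ℝ), GSet P X E r

/-- A radial part `τ` under the operator `E`. -/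
structure IsRadialPart {d : ℕ} (E : Matrix (Fin d) (Fin d) ℝ)
    (τ : (Fin d → ℝ) → ℝ) : Prop where
  continuous : Continuous τ
  nonneg : ∀ x, 0 ≤ τ x
  pos : ∀ x : Fin d → ℝ, x ≠ 0 → 0 < τ x
  map_zero : τ 0 = 0
  even : ∀ x, τ (-x) = τ x
  scaling : ∀ r : ℝ, 0 < r → ∀ x, τ (mpow r E *ᵥ x) = r * τ x
  isCompact_sphere : IsCompact {x | τ x = 1}
  zero_not_mem : (0 : Fin d → ℝ) ∉ {x | τ x = 1}
  tendsto_atTop : ∀ M : ℝ, ∃ R : ℝ, ∀ x : Fin d → ℝ, R ≤ ‖x‖ → M ≤ τ x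
  tendsto_zero : Tendsto τ (𝓝 0) (𝓝 0)

/-- `φ` is `E`-homogeneous: `φ(r^E x) = r φ(x)` for all `r > 0` and `x ≠ 0`. -/
def EHomogeneous {d : ℕ} (E : Matrix (Fin d) (Fin d) ℝ)
    (φ : (Fin d → ℝ) → ℝ) : Prop :=
  ∀ r : ℝ, 0 < r → ∀ x : Fin d → ℝ, x ≠ 0 → φ (mpow r E *ᵥ x) = r * φ x

/-- `ψ` is `(β,E)`-admissible with respect to the radial part `τ`. -/
def Admissible {d : ℕ} (τ : (Fin d → ℝ) → ℝ) (β : ℝ)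
    (ψ : (Fin d → ℝ) → ℝ) : Prop :=
  (∀ x : Fin d → ℝ, x ≠ 0 → 0 < ψ x) ∧
  ∀ A B : ℝ, 0 < A → A < B → ∃ C : ℝ, 0 < C ∧ ∀ y : Fin d → ℝ,
    A ≤ euclNorm y → euclNorm y ≤ B → ∀ x : Fin d → ℝ, τ x ≤ 1 →
      |ψ (x + y) - ψ y| ≤ C * τ x ^ β


lemma exp_mulVec_eigen {n : ℕ} (A : Matrix (Fin n) (Fin n) ℝ) (v : Fin n → ℝ) (c : ℝ)
    (h : A *ᵥ v = c • v) : NormedSpace.exp A *ᵥ v = Real.exp c • v := by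
  letI : SeminormedRing (Matrix (Fin n) (Fin n) ℝ) := Matrix.linftyOpSemiNormedRing
  letI : NormedRing (Matrix (Fin n) (Fin n) ℝ) := Matrix.linftyOpNormedRing
  letI : NormedAlgebra ℝ (Matrix (Fin n) (Fin n) ℝ) := Matrix.linftyOpNormedAlgebra
  have hpow : ∀ k : ℕ, A ^ k *ᵥ v = c ^ k • v := by
    intro k
    induction k with
    | zero => simp
    | succ k ih =>
      rw [pow_succ, ← Matrix.mulVec_mulVec, h, Matrix.mulVec_smul, ih, smul_smul, pow_succ,
        mul_comm]
  have hs : HasSum (fun k : ℕ => ((Nat.factorial k : ℝ))⁻¹ • A ^ k) (NormedSpace.exp A) :=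
    NormedSpace.exp_series_hasSum_exp' A
  let T : Matrix (Fin n) (Fin n) ℝ →ₗ[ℝ] (Fin n → ℝ) :=
    { toFun := fun M => M *ᵥ v
      map_add' := fun M N => Matrix.add_mulVec M N v
      map_smul' := fun a M => Matrix.smul_mulVec a M v }
  have hTc : Continuous T := LinearMap.continuous_of_finiteDimensional T
  have hs2 : HasSum (fun k : ℕ => T (((Nat.factorial k : ℝ))⁻¹ • A ^ k)) (T (NormedSpace.exp A)) :=
    hs.map T.toAddMonoidHom hTc
  have hs3 : HasSum (fun k : ℕ => ((Nat.factorial k : ℝ))⁻¹ • c ^ k • v) (NormedSpace.exp A *ᵥ v) := by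
    simpa [T, Matrix.smul_mulVec, hpow] using hs2
  have hr : HasSum (fun k : ℕ => ((Nat.factorial k : ℝ))⁻¹ • c ^ k) (Real.exp c) := by
    rw [Real.exp_eq_exp_ℝ]
    exact NormedSpace.exp_series_hasSum_exp' c
  let S : ℝ →ₗ[ℝ] (Fin n → ℝ) :=
    { toFun := fun a => a • v
      map_add' := fun a b => add_smul a b v
      map_smul' := fun a b => by simp [smul_smul] }
  have hSc : Continuous S := LinearMap.continuous_of_finiteDimensional S
  have hr2 : HasSum (fun k : ℕ => ((Nat.factorial k : ℝ))⁻¹ • c ^ k • v) (Real.exp c • v) := by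
    simpa [S, smul_smul, Function.comp_def] using hr.map S.toAddMonoidHom hSc
  exact hs3.unique hr2


lemma translation_trivial {m : ℕ} (μ : Measure (Fin m → ℝ)) [IsProbabilityMeasure μ]
    (c : Fin m → ℝ) (h : μ.map (· + c) = μ) : c = 0 := by
  by_contra hc
  have hmc : ∀ a : Fin m → ℝ, Measurable (· + a) := fun a => measurable_add_const a
  have hiter : ∀ n : ℕ, μ.map (· + n • c) = μ := by
    intro n
    induction n with
    | zero => simp [Measure.map_id]
    | succ n ih =>
      have hco : (fun x : Fin m → ℝ => x + (n + 1) • c)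
          = (· + c) ∘ (· + n • c) := by
        funext x
        show x + (n + 1) • c = (x + n • c) + c
        rw [succ_nsmul, add_assoc]
      rw [hco, ← Measure.map_map (hmc c) (hmc (n • c)), ih, h]
  have h1 : (1 : ℝ≥0∞) = μ univ := (measure_univ).symm
  have htend : Tendsto (fun n : ℕ => μ (Metric.closedBall 0 n)) atTop (𝓝 (μ univ)) := by
    have := tendsto_measure_iUnion_atTop (μ := μ)
      (s := fun n : ℕ => Metric.closedBall (0 : Fin m → ℝ) n)
      (fun i j hij => Metric.closedBall_subset_closedBall (by exact_mod_cast hij))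
    rwa [Metric.iUnion_closedBall_nat] at this
  have hhalf : (1 : ℝ≥0∞) / 2 < μ univ := by rw [← h1]; norm_num
  obtain ⟨R, hR⟩ : ∃ R : ℕ, (1 : ℝ≥0∞) / 2 < μ (Metric.closedBall 0 R) :=
    (htend.eventually (eventually_gt_nhds hhalf)).exists
  have hcn : 0 < ‖c‖ := norm_pos_iff.mpr hc
  obtain ⟨k, hk⟩ := exists_nat_gt (2 * (R : ℝ) / ‖c‖)
  have hkc : 2 * (R : ℝ) < ‖k • c‖ := by
    have : ‖k • c‖ = (k : ℝ) * ‖c‖ := by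
      rw [← Nat.cast_smul_eq_nsmul ℝ k c, norm_smul, Real.norm_natCast]
    rw [this]
    calc 2 * (R : ℝ) = 2 * R / ‖c‖ * ‖c‖ := by field_simp
    _ < k * ‖c‖ := by exact mul_lt_mul_of_pos_right hk hcn
  set E := Metric.closedBall (0 : Fin m → ℝ) (R : ℝ) with hEdef
  have hEm : MeasurableSet E := Metric.isClosed_closedBall.measurableSet
  have hE'm : MeasurableSet ((· + k • c) ⁻¹' E) := hEm.preimage (hmc _)
  have hE' : μ ((· + k • c) ⁻¹' E) = μ E := by
    conv_rhs => rw [← hiter k]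
    rw [Measure.map_apply (hmc _) hEm]
  have hdisj : Disjoint E ((· + k • c) ⁻¹' E) := by
    rw [Set.disjoint_left]
    intro x hx hx'
    have h1 : ‖x‖ ≤ (R : ℝ) := by
      simpa [E, Metric.mem_closedBall, dist_eq_norm] using hx
    have h2 : ‖x + k • c‖ ≤ (R : ℝ) := by
      simpa [E, Metric.mem_closedBall, dist_eq_norm] using hx'
    have : ‖k • c‖ ≤ 2 * (R : ℝ) := by
      calc ‖k • c‖ = ‖(x + k • c) - x‖ := by rw [add_sub_cancel_left]
      _ ≤ ‖x + k • c‖ + ‖x‖ := norm_sub_le _ _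
      _ ≤ R + R := add_le_add h2 h1
      _ = 2 * R := by ring
    exact absurd this (not_le.mpr hkc)
  have hsum : μ E + μ ((· + k • c) ⁻¹' E) ≤ 1 := by
    rw [← measure_union hdisj hE'm]
    exact (measure_mono (subset_univ _)).trans_eq measure_univ
  rw [hE'] at hsum
  have : (1 : ℝ≥0∞) < μ E + μ E := by
    calc (1 : ℝ≥0∞) = 1 / 2 + 1 / 2 := by rw [ENNReal.add_halves]
    _ < μ E + μ E := ENNReal.add_lt_add hR hR
  exact absurd hsum (not_le.mpr this)

lemma shift_cancel {m : ℕ} {Ω : Type*} [MeasurableSpace Ω] (P : Measure Ω)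
    [IsProbabilityMeasure P] (Y : Ω → (Fin m → ℝ)) (hY : Measurable Y)
    (c₁ c₂ : Fin m → ℝ)
    (h : P.map (fun ω => Y ω + c₁) = P.map (fun ω => Y ω + c₂)) : c₁ = c₂ := by
  set μ := P.map (fun ω => Y ω + c₂) with hμdef
  have hYm : Measurable (fun ω => Y ω + c₂) := hY.add_const c₂
  haveI : IsProbabilityMeasure μ := Measure.isProbabilityMeasure_map hYm.aemeasurable
  have hco : (fun ω => Y ω + c₁) = (· + (c₁ - c₂)) ∘ (fun ω => Y ω + c₂) := by
    funext ω
    show Y ω + c₁ = (Y ω + c₂) + (c₁ - c₂)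
    abel
  have hmap : μ.map (· + (c₁ - c₂)) = μ := by
    rw [hμdef, Measure.map_map (measurable_add_const _) hYm, ← hco, h]
  have := translation_trivial μ (c₁ - c₂) hmap
  have := sub_eq_zero.mp this
  exact this


lemma mpow_mulVec_eigen {n : ℕ} (A : Matrix (Fin n) (Fin n) ℝ) (v : Fin n → ℝ) (lam : ℝ)
    (h : A *ᵥ v = lam • v) {r : ℝ} (hr : 0 < r) :
    mpow r A *ᵥ v = (r ^ lam) • v := by
  have h2 : (Real.log r • A) *ᵥ v = (Real.log r * lam) • v := by
    rw [Matrix.smul_mulVec, h, smul_smul]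
  rw [mpow, exp_mulVec_eigen _ _ _ h2, Real.rpow_def_of_pos hr]

lemma mpow_mul {n : ℕ} (A : Matrix (Fin n) (Fin n) ℝ) {r s : ℝ} (hr : 0 < r) (hs : 0 < s) :
    mpow (r * s) A = mpow r A * mpow s A := by
  unfold mpow
  rw [Real.log_mul hr.ne' hs.ne', add_smul]
  exact Matrix.exp_add_of_commute _ _
    (((Commute.refl A).smul_right (Real.log s)).smul_left (Real.log r))

lemma mulVec_continuous {n m : ℕ} (M : Matrix (Fin m) (Fin n) ℝ) :
    Continuous (fun x : Fin n → ℝ => M *ᵥ x) := by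
  have : Continuous (Matrix.mulVecLin M) := LinearMap.continuous_of_finiteDimensional _
  exact this


/-- **Proposition 2.1 (i).** Along an eigenvector direction `ξ` of `E` with eigenvalue
`λ > 0`, the shift of an `(E,D)`-w.o.s.s. field satisfies
`b_r(uξ) = f(u r^λ) - r^D f(u)` for a continuous `f : ℝ \ {0} → ℝ^m`. -/
theorem woss_eigendirection_shift {d m : ℕ} (hd : 2 ≤ d) (hm : 2 ≤ m)
    {Ω : Type*} [MeasurableSpace Ω] (P : Measure Ω) [IsProbabilityMeasure P]
    (X : (Fin d → ℝ) → Ω → (Fin m → ℝ)) (hXmeas : ∀ t, Measurable (X t))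
    (E : Matrix (Fin d) (Fin d) ℝ) (hE : E ∈ QSet d)
    (hXc : StochContinuous P X) (hXp : ProperField P X)
    (D : Matrix (Fin m) (Fin m) ℝ) (hD : D ∈ MSet m)
    (b : ℝ → (Fin d → ℝ) → (Fin m → ℝ))
    (hbc : ∀ r : ℝ, 0 < r → ∀ t : Fin d → ℝ,
      ContinuousAt (fun p : ℝ × (Fin d → ℝ) => b p.1 p.2) (r, t))
    (hfdd : ∀ r : ℝ, 0 < r →
      IdentFDD P (fun t ω => X (mpow r E *ᵥ t) ω)
        (fun t ω => mpow r D *ᵥ X t ω + b r t))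
    (lam : ℝ) (hlam : 0 < lam) (ξ : Fin d → ℝ) (hξ : ξ ≠ 0)
    (hEξ : E *ᵥ ξ = lam • ξ) :
    ∃ f : ℝ → (Fin m → ℝ), ContinuousOn f {u : ℝ | u ≠ 0} ∧
      ∀ u : ℝ, u ≠ 0 → ∀ r : ℝ, 0 < r →
        b r (u • ξ) = f (u * r ^ lam) - mpow r D *ᵥ f u := by
  classical
  -- measurability of affine images
  have hmeasMX : ∀ (M : Matrix (Fin m) (Fin m) ℝ) (t : Fin d → ℝ) (c : Fin m → ℝ),
      Measurable (fun ω => M *ᵥ X t ω + c) := fun M t c =>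
    (((mulVec_continuous M).measurable).comp (hXmeas t)).add_const c
  -- one-point law identity
  have onept : ∀ r : ℝ, 0 < r → ∀ t₀ : Fin d → ℝ,
      P.map (X (mpow r E *ᵥ t₀)) =
        P.map (fun ω => mpow r D *ᵥ X t₀ ω + b r t₀) := by
    intro r hr t₀
    have h := hfdd r hr 1 (fun _ => t₀)
    have hF : Measurable (fun ω (_ : Fin 1) => X (mpow r E *ᵥ t₀) ω) :=
      measurable_pi_lambda _ (fun _ => hXmeas _)
    have hG : Measurable (fun ω (_ : Fin 1) => mpow r D *ᵥ X t₀ ω + b r t₀) :=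
      measurable_pi_lambda _ (fun _ => hmeasMX _ _ _)
    have e := congrArg (fun ν => Measure.map (fun g : Fin 1 → (Fin m → ℝ) => g 0) ν) h
    simp only at e
    rw [Measure.map_map (measurable_pi_apply 0) hF,
      Measure.map_map (measurable_pi_apply 0) hG] at e
    simpa [Function.comp_def] using e
  -- the cocycle identity along an eigendirection
  have key : ∀ η : Fin d → ℝ, E *ᵥ η = lam • η → ∀ r s : ℝ, 0 < r → 0 < s →
      b (r * s) η = mpow r D *ᵥ b s η + b r ((s ^ lam) • η) := by
    intro η hη r s hr hs
    have hrs : 0 < r * s := mul_pos hr hs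
    have e1 : mpow (r * s) E *ᵥ η = ((r * s) ^ lam) • η := mpow_mulVec_eigen E η lam hη hrs
    have e2 : mpow s E *ᵥ η = (s ^ lam) • η := mpow_mulVec_eigen E η lam hη hs
    have e3 : mpow r E *ᵥ ((s ^ lam) • η) = ((r * s) ^ lam) • η := by
      rw [Matrix.mulVec_smul, mpow_mulVec_eigen E η lam hη hr, smul_smul,
        Real.mul_rpow hr.le hs.le, mul_comm]
    have law1 := onept (r * s) hrs η
    rw [e1] at law1
    have law2 := onept r hr ((s ^ lam) • η)
    rw [e3] at law2
    have law3 := onept s hs η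
    rw [e2] at law3
    -- push law3 through the affine map T
    set c₀ : Fin m → ℝ := b r ((s ^ lam) • η) with hc₀
    have hTm : Measurable (fun x : Fin m → ℝ => mpow r D *ᵥ x + c₀) :=
      ((mulVec_continuous (mpow r D)).measurable).add_const c₀
    have law4 : P.map (fun ω => mpow r D *ᵥ X ((s ^ lam) • η) ω + c₀) =
        P.map (fun ω => mpow r D *ᵥ (mpow s D *ᵥ X η ω + b s η) + c₀) := by
      have e := congrArg (fun ν => Measure.map (fun x : Fin m → ℝ => mpow r D *ᵥ x + c₀) ν) law3
      rw [Measure.map_map hTm (hXmeas _), Measure.map_map hTm (hmeasMX _ _ _)] at e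
      simpa [Function.comp_def] using e
    have hrw : (fun ω => mpow r D *ᵥ (mpow s D *ᵥ X η ω + b s η) + c₀) =
        (fun ω => mpow (r * s) D *ᵥ X η ω + (mpow r D *ᵥ b s η + c₀)) := by
      funext ω
      rw [Matrix.mulVec_add, Matrix.mulVec_mulVec, ← mpow_mul D hr hs, add_assoc]
    have laweq : P.map (fun ω => mpow (r * s) D *ᵥ X η ω + b (r * s) η) =
        P.map (fun ω => mpow (r * s) D *ᵥ X η ω + (mpow r D *ᵥ b s η + c₀)) := by
      rw [← hrw, ← law4, ← law2, ← law1]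
    exact shift_cancel P _ (((mulVec_continuous (mpow (r * s) D)).measurable).comp
      (hXmeas η)) _ _ laweq
  -- eigendirection for -ξ
  have hEnξ : E *ᵥ (-ξ) = lam • (-ξ) := by rw [Matrix.mulVec_neg, hEξ, smul_neg]
  -- definition of f
  set f : ℝ → (Fin m → ℝ) :=
    fun u => if 0 < u then b (u ^ lam⁻¹) ξ else b ((-u) ^ lam⁻¹) (-ξ) with hfdef
  have hinv : ∀ u : ℝ, 0 < u → (u ^ lam⁻¹) ^ lam = u := by
    intro u hu
    rw [← Real.rpow_mul hu.le, inv_mul_cancel₀ hlam.ne', Real.rpow_one]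
  refine ⟨f, ?_, ?_⟩
  · -- continuity
    intro u hu
    have hu' : u ≠ 0 := hu
    apply ContinuousAt.continuousWithinAt
    rcases hu'.lt_or_gt with hneg | hpos
    · have hpos' : 0 < (-u) ^ lam⁻¹ := Real.rpow_pos_of_pos (neg_pos.mpr hneg) _
      have h2 : ContinuousAt (fun v : ℝ => (((-v) ^ lam⁻¹ : ℝ), (-ξ))) u := by
        refine ContinuousAt.prodMk ?_ continuousAt_const
        exact (Real.continuousAt_rpow_const (-u) lam⁻¹
          (Or.inl (neg_ne_zero.mpr hu'))).comp (continuousAt_neg (x := u))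
      have h1 : ContinuousAt ((fun p : ℝ × (Fin d → ℝ) => b p.1 p.2) ∘
          (fun v : ℝ => (((-v) ^ lam⁻¹ : ℝ), (-ξ)))) u :=
        ContinuousAt.comp (hbc ((-u) ^ lam⁻¹) hpos' (-ξ)) h2
      refine h1.congr ?_
      filter_upwards [eventually_lt_nhds hneg] with v hv
      show b ((-v) ^ lam⁻¹) (-ξ) = f v
      simp only [hfdef, if_neg (not_lt.mpr hv.le)]
    · have hpos' : 0 < u ^ lam⁻¹ := Real.rpow_pos_of_pos hpos _
      have h2 : ContinuousAt (fun v : ℝ => ((v ^ lam⁻¹ : ℝ), ξ)) u :=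
        ContinuousAt.prodMk (Real.continuousAt_rpow_const u lam⁻¹ (Or.inl hu'))
          continuousAt_const
      have h1 : ContinuousAt ((fun p : ℝ × (Fin d → ℝ) => b p.1 p.2) ∘
          (fun v : ℝ => ((v ^ lam⁻¹ : ℝ), ξ))) u :=
        ContinuousAt.comp (hbc (u ^ lam⁻¹) hpos' ξ) h2
      refine h1.congr ?_
      filter_upwards [eventually_gt_nhds hpos] with v hv
      show b (v ^ lam⁻¹) ξ = f v
      simp only [hfdef, if_pos hv]
  · -- the functional identity
    intro u hu r hr
    have hrl : 0 < r ^ lam := Real.rpow_pos_of_pos hr _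
    rcases hu.lt_or_gt with hneg | hpos
    · have hnu : 0 < -u := neg_pos.mpr hneg
      set s : ℝ := (-u) ^ lam⁻¹ with hsdef
      have hs : 0 < s := Real.rpow_pos_of_pos hnu _
      have hsl : s ^ lam = -u := hinv (-u) hnu
      have hk := key (-ξ) hEnξ r s hr hs
      have hsm : (s ^ lam) • (-ξ) = u • ξ := by rw [hsl, neg_smul_neg]
      rw [hsm] at hk
      have hfu : f u = b s (-ξ) := by
        simp only [hfdef, if_neg (not_lt.mpr hneg.le), ← hsdef]
      have hurl : u * r ^ lam < 0 := mul_neg_of_neg_of_pos hneg hrl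
      have hfur : f (u * r ^ lam) = b (r * s) (-ξ) := by
        have h3 : (-(u * r ^ lam)) ^ lam⁻¹ = r * s := by
          rw [neg_mul_eq_neg_mul, Real.mul_rpow hnu.le hrl.le, ← Real.rpow_mul hr.le,
            mul_inv_cancel₀ hlam.ne', Real.rpow_one, mul_comm]
        simp only [hfdef, if_neg (not_lt.mpr hurl.le), h3]
      rw [hfu, hfur, hk]
      abel
    · set s : ℝ := u ^ lam⁻¹ with hsdef
      have hs : 0 < s := Real.rpow_pos_of_pos hpos _
      have hsl : s ^ lam = u := hinv u hpos
      have hk := key ξ hEξ r s hr hs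
      rw [hsl] at hk
      have hfu : f u = b s ξ := by simp only [hfdef, if_pos hpos, ← hsdef]
      have hurl : 0 < u * r ^ lam := mul_pos hpos hrl
      have hfur : f (u * r ^ lam) = b (r * s) ξ := by
        have h3 : (u * r ^ lam) ^ lam⁻¹ = r * s := by
          rw [Real.mul_rpow hpos.le hrl.le, ← Real.rpow_mul hr.le,
            mul_inv_cancel₀ hlam.ne', Real.rpow_one, mul_comm]
        simp only [hfdef, if_pos hurl, h3]
      rw [hfu, hfur, hk]
      abel
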